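/- Let X be a set and let 𝒜 be a family of subsets of X that has independence dimension ≤ 1 with respect to X. Then there exists a linear order < on X such that for every A ∈ 𝒜, either A is a <-convex subset of X or X \ A is a <-convex subset of X. -/

import Mathlib

/-- `S` is convex with respect to the strict order `r`. -/
def IsRConvex {X : Type*} (r : X → X → Prop) (S : Set X) : Prop :=
  ∀ a b c : X, r a b → r b c → a ∈ S → c ∈ S → b ∈ S

/-- A family of subsets of `X` has independence dimension `≤ 1` with respect to `X`. -/
def IndepDimLEOne {X : Type*} (𝒜 : Set (Set X)) : Prop :=
  ∀ A ∈ 𝒜, ∀ B ∈ 𝒜, A ∩ B = ∅ ∨ A \ B = ∅ ∨ B \ A = ∅ ∨ (A ∪ B)ᶜ = ∅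

theorem stmt_0 {X : Type*} (𝒜 : Set (Set X)) (h : IndepDimLEOne 𝒜) :
    ∃ r : X → X → Prop, IsStrictTotalOrder X r ∧
      ∀ A ∈ 𝒜, IsRConvex r A ∨ IsRConvex r Aᶜ := by
  classical
  by_cases hX : Nonempty X
  case neg =>
    refine ⟨fun _ _ => False,
      { trichotomous := fun a => absurd ⟨a⟩ hX,
        irrefl := fun a => absurd ⟨a⟩ hX,
        trans := fun a => absurd ⟨a⟩ hX },
      fun A _ => Or.inl (fun a => absurd ⟨a⟩ hX)⟩
  obtain ⟨x₀⟩ := hX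
  set fl : Set X → Set X := fun A => if x₀ ∈ A then Aᶜ else A with hfl
  set ℬ : Set (Set X) := fl '' 𝒜 with hℬ
  -- laminar
  have hlam : ∀ B ∈ ℬ, ∀ C ∈ ℬ, ∀ z, z ∈ B → z ∈ C → B ⊆ C ∨ C ⊆ B := by
    rintro B ⟨A₁, hA₁, rfl⟩ C ⟨A₂, hA₂, rfl⟩ z hzB hzC
    have h4 := h A₁ hA₁ A₂ hA₂
    rw [Set.eq_empty_iff_forall_notMem, Set.eq_empty_iff_forall_notMem,
      Set.eq_empty_iff_forall_notMem, Set.eq_empty_iff_forall_notMem] at h4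
    simp only [Set.mem_inter_iff, Set.mem_diff, Set.mem_compl_iff, Set.mem_union,
      not_and, not_or, not_not] at h4
    by_cases h1 : x₀ ∈ A₁ <;> by_cases h2 : x₀ ∈ A₂
    · rw [hfl] at hzB hzC ⊢
      simp only [if_pos h1, if_pos h2, Set.mem_compl_iff] at hzB hzC ⊢
      rcases h4 with h4 | h4 | h4 | h4
      · exact absurd h2 (h4 x₀ h1)
      · exact Or.inr fun w hw hw1 => hw (h4 w hw1)
      · exact Or.inl fun w hw hw1 => hw (h4 w hw1)
      · exact absurd (h4 z hzB) hzC
    · rw [hfl] at hzB hzC ⊢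
      simp only [if_pos h1, if_neg h2, Set.mem_compl_iff] at hzB hzC ⊢
      rcases h4 with h4 | h4 | h4 | h4
      · exact Or.inr fun w hw hwA₁ => h4 w hwA₁ hw
      · exact absurd (h4 x₀ h1) h2
      · exact absurd (h4 z hzC) hzB
      · exact Or.inl fun w hw => h4 w hw
    · rw [hfl] at hzB hzC ⊢
      simp only [if_neg h1, if_pos h2, Set.mem_compl_iff] at hzB hzC ⊢
      rcases h4 with h4 | h4 | h4 | h4
      · exact Or.inl fun w hw => h4 w hw
      · exact absurd (h4 z hzB) hzC
      · exact absurd (h4 x₀ h2) h1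
      · exact Or.inr fun w hw => Classical.byContradiction fun hn => hw (h4 w hn)
    · rw [hfl] at hzB hzC ⊢
      simp only [if_neg h1, if_neg h2] at hzB hzC ⊢
      rcases h4 with h4 | h4 | h4 | h4
      · exact absurd hzC (h4 z hzB)
      · exact Or.inl fun w hw => h4 w hw
      · exact Or.inr fun w hw => h4 w hw
      · exact absurd (h4 x₀ h1) h2
  -- the separator unions
  set U : X → X → Set X := fun x y => ⋃₀ {B | B ∈ ℬ ∧ x ∈ B ∧ y ∉ B} with hU
  set W : Set X → Set X → Prop := WellOrderingRel with hW
  set t : X → X → Prop := WellOrderingRel with ht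
  have hWasym : ∀ S T : Set X, W S T → W T S → False := fun S T h1 h2 =>
    irrefl_of W S (trans_of W h1 h2)
  have hUnot : ∀ x y : X, x ∉ U y x := by
    rintro x y ⟨B, ⟨_, _, hx⟩, hxB⟩
    exact hx hxB
  have hUsub : ∀ (x y : X) (B : Set X), B ∈ ℬ → x ∈ B → y ∉ B → B ⊆ U x y :=
    fun x y B hB hx hy => Set.subset_sUnion_of_mem ⟨hB, hx, hy⟩
  have hunsep : ∀ x y : X, U x y = U y x → ∀ B ∈ ℬ, (x ∈ B ↔ y ∈ B) := by
    intro x y he B hB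
    constructor
    · intro hx
      by_contra hy
      have hx' : x ∈ U x y := hUsub x y B hB hx hy hx
      rw [he] at hx'
      exact hUnot x y hx'
    · intro hy
      by_contra hx
      have hy' : y ∈ U y x := hUsub y x B hB hy hx hy
      rw [← he] at hy'
      exact hUnot y x hy'
  have hcong : ∀ x y : X, (∀ B ∈ ℬ, (x ∈ B ↔ y ∈ B)) → ∀ z : X,
      U x z = U y z ∧ U z x = U z y := by
    intro x y hxy z
    constructor
    · apply congrArg Set.sUnion
      ext B
      exact ⟨fun ⟨hB, hx, hz⟩ => ⟨hB, (hxy B hB).1 hx, hz⟩,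
             fun ⟨hB, hy, hz⟩ => ⟨hB, (hxy B hB).2 hy, hz⟩⟩
    · apply congrArg Set.sUnion
      ext B
      exact ⟨fun ⟨hB, hz, hx⟩ => ⟨hB, hz, fun hy => hx ((hxy B hB).2 hy)⟩,
             fun ⟨hB, hz, hy⟩ => ⟨hB, hz, fun hx => hy ((hxy B hB).1 hx)⟩⟩
  have hG : ∀ (u v w : X) (B₀ : Set X), B₀ ∈ ℬ → u ∈ B₀ → v ∈ B₀ → w ∉ B₀ →
      U w u = U w v ∧ U u w = U v w := by
    intro u v w B₀ hB₀ hu hv hw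
    constructor
    · apply congrArg Set.sUnion
      ext B
      constructor
      · rintro ⟨hB, hwB, huB⟩
        refine ⟨hB, hwB, fun hvB => ?_⟩
        rcases hlam B hB B₀ hB₀ v hvB hv with hs | hs
        · exact hw (hs hwB)
        · exact huB (hs hu)
      · rintro ⟨hB, hwB, hvB⟩
        refine ⟨hB, hwB, fun huB => ?_⟩
        rcases hlam B hB B₀ hB₀ u huB hu with hs | hs
        · exact hw (hs hwB)
        · exact hvB (hs hv)
    · apply Set.Subset.antisymm
      · apply Set.sUnion_subset
        rintro B ⟨hB, huB, hwB⟩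
        rcases hlam B hB B₀ hB₀ u huB hu with hs | hs
        · exact hs.trans (hUsub v w B₀ hB₀ hv hw)
        · exact hUsub v w B hB (hs hv) hwB
      · apply Set.sUnion_subset
        rintro B ⟨hB, hvB, hwB⟩
        rcases hlam B hB B₀ hB₀ v hvB hv with hs | hs
        · exact hs.trans (hUsub u w B₀ hB₀ hu hw)
        · exact hUsub u w B hB (hs hu) hwB
  set r : X → X → Prop := fun x y =>
    (U x y = U y x ∧ t x y) ∨ (U x y ≠ U y x ∧ W (U x y) (U y x)) with hr
  have hrirr : ∀ x, ¬ r x x := by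
    rintro x (⟨_, hx⟩ | ⟨hne, _⟩)
    · exact irrefl_of t x hx
    · exact hne rfl
  have hrtri : ∀ x y, r x y ∨ x = y ∨ r y x := by
    intro x y
    by_cases he : U x y = U y x
    · rcases trichotomous_of t x y with h1 | h1 | h1
      · exact Or.inl (Or.inl ⟨he, h1⟩)
      · exact Or.inr (Or.inl h1)
      · exact Or.inr (Or.inr (Or.inl ⟨he.symm, h1⟩))
    · rcases trichotomous_of W (U x y) (U y x) with h1 | h1 | h1
      · exact Or.inl (Or.inr ⟨he, h1⟩)
      · exact absurd h1 he
      · exact Or.inr (Or.inr (Or.inr ⟨fun e => he e.symm, h1⟩))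
  have hrtrans : ∀ x y z, r x y → r y z → r x z := by
    intro x y z hxy hyz
    rcases hxy with ⟨he1, ht1⟩ | ⟨hn1, hw1⟩
    · have hu := hunsep x y he1
      have h1 := hcong x y hu z
      rcases hyz with ⟨he2, ht2⟩ | ⟨hn2, hw2⟩
      · exact Or.inl ⟨h1.1.trans (he2.trans h1.2.symm), trans_of t ht1 ht2⟩
      · refine Or.inr ⟨?_, ?_⟩
        · rw [h1.1, h1.2]; exact hn2
        · rw [h1.1, h1.2]; exact hw2
    · rcases hyz with ⟨he2, ht2⟩ | ⟨hn2, hw2⟩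
      · have hu := hunsep y z he2
        have h1 := hcong y z hu x
        refine Or.inr ⟨?_, ?_⟩
        · rw [← h1.1, ← h1.2]; exact hn1
        · rw [← h1.1, ← h1.2]; exact hw1
      · by_cases hyz2 : ∃ B ∈ ℬ, y ∈ B ∧ z ∈ B ∧ x ∉ B
        · obtain ⟨B₀, hB₀, hyB, hzB, hxB⟩ := hyz2
          have hg := hG y z x B₀ hB₀ hyB hzB hxB
          refine Or.inr ⟨?_, ?_⟩
          · rw [← hg.1, ← hg.2]; exact hn1
          · rw [← hg.1, ← hg.2]; exact hw1
        by_cases hxy2 : ∃ B ∈ ℬ, x ∈ B ∧ y ∈ B ∧ z ∉ B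
        · obtain ⟨B₀, hB₀, hxB, hyB, hzB⟩ := hxy2
          have hg := hG x y z B₀ hB₀ hxB hyB hzB
          refine Or.inr ⟨?_, ?_⟩
          · rw [hg.2, hg.1]; exact hn2
          · rw [hg.2, hg.1]; exact hw2
        by_cases hxz2 : ∃ B ∈ ℬ, x ∈ B ∧ z ∈ B ∧ y ∉ B
        · obtain ⟨B₀, hB₀, hxB, hzB, hyB⟩ := hxz2
          have hg := hG x z y B₀ hB₀ hxB hzB hyB
          -- hg.1 : U y x = U y z, hg.2 : U x y = U z y
          rw [hg.1, hg.2] at hw1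
          exact absurd hw2 (fun h2 => hWasym _ _ h2 hw1)
        · -- no pair is together: the three index families coincide suitably
          have e1 : U x y = U x z := by
            apply congrArg Set.sUnion
            ext B
            constructor
            · rintro ⟨hB, hxB, hyB⟩
              exact ⟨hB, hxB, fun hzB => hxz2 ⟨B, hB, hxB, hzB, hyB⟩⟩
            · rintro ⟨hB, hxB, hzB⟩
              exact ⟨hB, hxB, fun hyB => hxy2 ⟨B, hB, hxB, hyB, hzB⟩⟩
          have e2 : U y x = U y z := by
            apply congrArg Set.sUnion
            ext B
            constructor
            · rintro ⟨hB, hyB, hxB⟩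
              exact ⟨hB, hyB, fun hzB => hyz2 ⟨B, hB, hyB, hzB, hxB⟩⟩
            · rintro ⟨hB, hyB, hzB⟩
              exact ⟨hB, hyB, fun hxB => hxy2 ⟨B, hB, hxB, hyB, hzB⟩⟩
          have e3 : U z y = U z x := by
            apply congrArg Set.sUnion
            ext B
            constructor
            · rintro ⟨hB, hzB, hyB⟩
              exact ⟨hB, hzB, fun hxB => hxz2 ⟨B, hB, hxB, hzB, hyB⟩⟩
            · rintro ⟨hB, hzB, hxB⟩
              exact ⟨hB, hzB, fun hyB => hyz2 ⟨B, hB, hyB, hzB, hxB⟩⟩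
          rw [e1, e2] at hw1
          rw [e3] at hw2
          have hWxz : W (U x z) (U z x) := trans_of W hw1 hw2
          exact Or.inr ⟨fun e => hWasym _ _ hWxz (e ▸ hWxz), hWxz⟩
  have hconv : ∀ B₀ ∈ ℬ, IsRConvex r B₀ := by
    intro B₀ hB₀ a b c hab hbc ha hc
    by_contra hb
    have hg := hG a c b B₀ hB₀ ha hc hb
    -- hg.1 : U b a = U b c, hg.2 : U a b = U c b
    have hw1 : W (U a b) (U b a) := by
      rcases hab with ⟨he, _⟩ | ⟨_, hw⟩
      · exact absurd (he ▸ hUsub a b B₀ hB₀ ha hb ha) (hUnot a b)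
      · exact hw
    have hw2 : W (U b c) (U c b) := by
      rcases hbc with ⟨he, _⟩ | ⟨_, hw⟩
      · exact absurd (he.symm ▸ hUsub c b B₀ hB₀ hc hb hc) (hUnot c b)
      · exact hw
    rw [← hg.1, ← hg.2] at hw2
    exact hWasym _ _ hw1 hw2
  refine ⟨r, { trichotomous := fun a b h1 h2 => by rcases hrtri a b with h | h | h; exacts [absurd h h1, h, absurd h h2], irrefl := hrirr, trans := hrtrans }, ?_⟩
  intro A hA
  have hmem : fl A ∈ ℬ := ⟨A, hA, rfl⟩
  have hcA := hconv (fl A) hmem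
  by_cases hx : x₀ ∈ A
  · right
    rw [hfl] at hcA
    simpa [if_pos hx] using hcA
  · left
    rw [hfl] at hcA
    simpa [if_neg hx] using hcA
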